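/- Let B be a finite-dimensional K-algebra, A a maximal subalgebra of B with J(B) ⊄ A. Then J(A) = A ∩ J(B) is a two-sided ideal of B, J(B)² ⊆ J(A), and J(B)/J(A) is a simple B-bimodule. -/

import Mathlib

section Aux

variable {K B : Type*} [Field K] [Ring B] [Algebra K B]

/-- The Jacobson radical of `B` viewed as a `K`-submodule. -/
abbrev JmK (K B : Type*) [Field K] [Ring B] [Algebra K B] : Submodule K B :=
  Submodule.restrictScalars K (Ideal.jacobson (⊥ : Ideal B))

lemma jac_mul_right {x : B} (hx : x ∈ Ideal.jacobson (⊥ : Ideal B)) (b : B) :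
    x * b ∈ Ideal.jacobson (⊥ : Ideal B) :=
  (Ideal.jacobson (⊥ : Ideal B)).mul_mem_right b hx

lemma jac_mul_left {x : B} (hx : x ∈ Ideal.jacobson (⊥ : Ideal B)) (b : B) :
    b * x ∈ Ideal.jacobson (⊥ : Ideal B) := by
  simpa [smul_eq_mul] using (Ideal.jacobson (⊥ : Ideal B)).smul_mem b hx

lemma JmK_pow_mul_left {n : ℕ} (hn : 1 ≤ n) {x : B} (hx : x ∈ JmK K B ^ n) (b : B) :
    b * x ∈ JmK K B ^ n := by
  induction n, hn using Nat.le_induction generalizing x with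
  | base =>
    rw [pow_one] at hx ⊢
    exact jac_mul_left hx b
  | succ n hn ih =>
    rw [pow_succ'] at hx ⊢
    refine Submodule.mul_induction_on
      (C := fun y => b * y ∈ JmK K B * JmK K B ^ n) hx ?_ ?_
    · intro u hu v hv
      rw [← mul_assoc]
      exact Submodule.mul_mem_mul (jac_mul_left hu b) hv
    · intro y z hy hz
      rw [mul_add]
      exact add_mem hy hz

lemma JmK_pow_mul_right {n : ℕ} (hn : 1 ≤ n) {x : B} (hx : x ∈ JmK K B ^ n) (b : B) :
    x * b ∈ JmK K B ^ n := by
  induction n, hn using Nat.le_induction generalizing x with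
  | base =>
    rw [pow_one] at hx ⊢
    exact jac_mul_right hx b
  | succ n hn ih =>
    rw [pow_succ] at hx ⊢
    refine Submodule.mul_induction_on
      (C := fun y => y * b ∈ JmK K B ^ n * JmK K B) hx ?_ ?_
    · intro u hu v hv
      rw [mul_assoc]
      exact Submodule.mul_mem_mul hu (jac_mul_right hv b)
    · intro y z hy hz
      rw [add_mul]
      exact add_mem hy hz

lemma JmK_pow_antitone {i j : ℕ} (hi : 1 ≤ i) (hij : i ≤ j) :
    JmK K B ^ j ≤ JmK K B ^ i := by
  induction j, hij using Nat.le_induction with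
  | base => exact le_rfl
  | succ n hn ih =>
    refine le_trans ?_ ih
    rw [pow_succ]
    exact Submodule.mul_le.mpr fun u hu v hv => JmK_pow_mul_right (hi.trans hn) hu v

lemma JmK_nilpotent [FiniteDimensional K B] :
    ∃ n : ℕ, 0 < n ∧ JmK K B ^ n = ⊥ := by
  haveI : IsArtinianRing B := IsArtinianRing.of_finite K B
  have hf : ∀ {k l : ℕ}, k ≤ l → JmK K B ^ (l + 1) ≤ JmK K B ^ (k + 1) := fun {k l} h =>
    JmK_pow_antitone (Nat.succ_le_succ (Nat.zero_le _)) (Nat.succ_le_succ h)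
  obtain ⟨n, hn⟩ := IsArtinian.monotone_stabilizes
    (⟨fun k => OrderDual.toDual (JmK K B ^ (k + 1)), fun k l h => hf h⟩ : ℕ →o (Submodule K B)ᵒᵈ)
  have hstab : ∀ m, n ≤ m → JmK K B ^ (n + 1) = JmK K B ^ (m + 1) := fun m hm => hn m hm
  refine ⟨n + 1, Nat.succ_pos n, ?_⟩
  set V : Submodule K B := JmK K B ^ (n + 1) with hVdef
  have hVV : V * V = V := by
    have h2 : JmK K B ^ (n + 1) = JmK K B ^ (2 * n + 1 + 1) := hstab (2 * n + 1) (by omega)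
    rw [hVdef, ← pow_add, show n + 1 + (n + 1) = 2 * n + 1 + 1 by ring, ← h2]
  by_contra hVne
  obtain ⟨v0, hv0V, hv0⟩ := V.ne_bot_iff.mp hVne
  set F : Set (Ideal B) := {I | ∃ v ∈ V, ∃ x ∈ I, v * x ≠ 0} with hF
  have hFtop : (⊤ : Ideal B) ∈ F := ⟨v0, hv0V, 1, Submodule.mem_top, by rwa [mul_one]⟩
  obtain ⟨I₀, hI₀F, hI₀min⟩ := (wellFounded_lt (α := Ideal B)).has_min F ⟨⊤, hFtop⟩
  obtain ⟨w, hwV, a, haI₀, hwa⟩ := hI₀F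
  have hVleft : ∀ (b x : B), x ∈ V → b * x ∈ V := fun b x hx =>
    JmK_pow_mul_left (Nat.succ_le_succ (Nat.zero_le n)) hx b
  let Vb : Ideal B :=
    { carrier := V
      add_mem' := fun h1 h2 => V.add_mem h1 h2
      zero_mem' := V.zero_mem
      smul_mem' := fun c x hx => by simpa [smul_eq_mul] using hVleft c x hx }
  let I₁ : Ideal B := Submodule.map (LinearMap.toSpanSingleton B B a) Vb
  have hI₁mem : ∀ y : B, y ∈ I₁ ↔ ∃ v ∈ V, v * a = y := by
    intro y
    constructor
    · rintro ⟨v, hv, rfl⟩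
      exact ⟨v, hv, rfl⟩
    · rintro ⟨v, hv, rfl⟩
      exact ⟨v, hv, rfl⟩
  have hI₁le : I₁ ≤ I₀ := by
    rintro y ⟨v, hv, rfl⟩
    simpa [LinearMap.toSpanSingleton_apply] using I₀.smul_mem v haI₀
  have hI₁F : I₁ ∈ F := by
    by_contra hnot
    have hz : ∀ v ∈ V, ∀ x ∈ I₁, v * x = 0 := by
      intro v hv x hx
      by_contra hne
      exact hnot ⟨v, hv, x, hx, hne⟩
    have hVVa : ∀ u ∈ V * V, u * a = 0 := by
      intro u hu
      refine Submodule.mul_induction_on (C := fun u => u * a = 0) hu ?_ ?_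
      · intro p hp q hq
        rw [mul_assoc]
        exact hz p hp (q * a) ((hI₁mem (q * a)).mpr ⟨q, hq, rfl⟩)
      · intro y z hy hz'
        rw [add_mul, hy, hz', add_zero]
    exact hwa (hVVa w (by rwa [hVV]))
  have hI₁eq : I₁ = I₀ := by
    rcases lt_or_eq_of_le hI₁le with h | h
    · exact absurd h (hI₀min I₁ hI₁F)
    · exact h
  obtain ⟨v, hvV, hva⟩ := (hI₁mem a).mp (hI₁eq ▸ haI₀)
  have hvJ : v ∈ Ideal.jacobson (⊥ : Ideal B) := by
    have hv1 : v ∈ JmK K B ^ 1 :=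
      JmK_pow_antitone le_rfl (Nat.succ_le_succ (Nat.zero_le n)) hvV
    rwa [pow_one] at hv1
  obtain ⟨z, hz⟩ := Ideal.mem_jacobson_iff.mp hvJ (-1)
  rw [Ideal.mem_bot] at hz
  rw [mul_neg_one, neg_mul, neg_add_eq_sub] at hz
  have hzv : z - z * v = 1 := sub_eq_zero.mp hz
  have ha0 : a = 0 := by
    have h1 : (z - z * v) * a = a := by rw [hzv, one_mul]
    rw [sub_mul, mul_assoc, hva, sub_self] at h1
    exact h1.symm
  exact hwa (by rw [ha0, mul_zero])

end Aux

/-- For a maximal subalgebra `A` of a finite-dimensional algebra `B` with `J(B) ⊄ A`: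
`J(A) = A ∩ J(B)`, `A ∩ J(B)` is a two-sided ideal of `B`, `J(B)² ⊆ J(A)`, and
`J(B)/J(A)` is a simple `B`-bimodule. -/
theorem stmt12 {K B : Type*} [Field K] [Ring B] [Algebra K B] [FiniteDimensional K B]
    (A : Subalgebra K B) (hmax : IsCoatom A)
    (hJ : ¬ ∀ x ∈ Ideal.jacobson (⊥ : Ideal B), x ∈ A) :
    (∀ a : A, a ∈ Ideal.jacobson (⊥ : Ideal A) ↔ (a : B) ∈ Ideal.jacobson (⊥ : Ideal B))
    ∧ (∀ x : B, x ∈ A ∧ x ∈ Ideal.jacobson (⊥ : Ideal B) → ∀ b : B,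
        (b * x ∈ A ∧ b * x ∈ Ideal.jacobson (⊥ : Ideal B))
        ∧ (x * b ∈ A ∧ x * b ∈ Ideal.jacobson (⊥ : Ideal B)))
    ∧ (∀ x ∈ Ideal.jacobson (⊥ : Ideal B), ∀ y ∈ Ideal.jacobson (⊥ : Ideal B), x * y ∈ A)
    ∧ (∀ H : Ideal B, (∀ x ∈ H, ∀ b : B, x * b ∈ H) →
        (∀ x : B, x ∈ A ∧ x ∈ Ideal.jacobson (⊥ : Ideal B) → x ∈ H) →
        H ≤ Ideal.jacobson (⊥ : Ideal B) →
        (∀ x ∈ H, x ∈ A) ∨ H = Ideal.jacobson (⊥ : Ideal B)) := by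
  classical
  obtain ⟨n, hn0, hJn⟩ := JmK_nilpotent (K := K) (B := B)
  push_neg at hJ
  obtain ⟨x0, hx0J, hx0A⟩ := hJ
  have hJle : ∀ M : Ideal B, M.IsMaximal → Ideal.jacobson (⊥ : Ideal B) ≤ M :=
    fun M hM => sInf_le ⟨bot_le, hM⟩
  -- If some power of J is not contained in A, then A + that power is all of B.
  have hsup : ∀ t : ℕ, 1 ≤ t → (∃ y ∈ JmK K B ^ t, y ∉ A) →
      ∀ b : B, b ∈ Subalgebra.toSubmodule A ⊔ JmK K B ^ t := by
    rintro t ht ⟨y, hyt, hyA⟩ b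
    set W : Submodule K B := Subalgebra.toSubmodule A ⊔ JmK K B ^ t with hW
    have h1W : (1 : B) ∈ W := Submodule.mem_sup_left A.one_mem
    have hmulW : ∀ p q : B, p ∈ W → q ∈ W → p * q ∈ W := by
      intro p q hp hq
      obtain ⟨a1, ha1, u1, hu1, rfl⟩ := Submodule.mem_sup.mp hp
      obtain ⟨a2, ha2, u2, hu2, rfl⟩ := Submodule.mem_sup.mp hq
      have e : (a1 + u1) * (a2 + u2) = a1 * a2 + (a1 * u2 + (u1 * a2 + u1 * u2)) := by
        noncomm_ring
      rw [e]
      refine add_mem (Submodule.mem_sup_left (A.mul_mem ha1 ha2 : a1 * a2 ∈ A))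
        (Submodule.mem_sup_right (add_mem ?_ (add_mem ?_ ?_)))
      · exact JmK_pow_mul_left ht hu2 a1
      · exact JmK_pow_mul_right ht hu1 a2
      · exact JmK_pow_mul_left ht hu2 u1
    have hAle : A ≤ W.toSubalgebra h1W hmulW := fun z hz => Submodule.mem_sup_left hz
    have hAlt : A < W.toSubalgebra h1W hmulW := by
      refine lt_of_le_of_ne hAle ?_
      intro hAS
      have hyS : y ∈ W.toSubalgebra h1W hmulW := Submodule.mem_sup_right hyt
      rw [hAS] at hyA
      exact hyA hyS
    have hStop : W.toSubalgebra h1W hmulW = ⊤ := hmax.2 _ hAlt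
    have hbS : b ∈ W.toSubalgebra h1W hmulW := by rw [hStop]; exact Algebra.mem_top
    exact Submodule.mem_toSubalgebra.mp hbS
  have hB1 : ∀ b : B, b ∈ Subalgebra.toSubmodule A ⊔ JmK K B ^ 1 :=
    hsup 1 le_rfl ⟨x0, by rwa [pow_one], hx0A⟩
  have hdecomp : ∀ b : B, ∃ a ∈ A, ∃ j ∈ Ideal.jacobson (⊥ : Ideal B), b = a + j := by
    intro b
    obtain ⟨a, ha, j, hj, he⟩ := Submodule.mem_sup.mp (hB1 b)
    exact ⟨a, ha, j, by rwa [pow_one] at hj, he.symm⟩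
  -- Part 3 : J * J ⊆ A
  have part3 : ∀ x ∈ Ideal.jacobson (⊥ : Ideal B), ∀ y ∈ Ideal.jacobson (⊥ : Ideal B),
      x * y ∈ A := by
    have hex : ∃ k : ℕ, ∀ x ∈ JmK K B ^ (k + 1), x ∈ A := by
      refine ⟨n, fun x hx => ?_⟩
      have hxn : x ∈ JmK K B ^ n := JmK_pow_antitone hn0 (Nat.le_succ n) hx
      rw [hJn, Submodule.mem_bot] at hxn
      rw [hxn]
      exact A.zero_mem
    set m := Nat.find hex with hmdef
    have hmspec : ∀ x ∈ JmK K B ^ (m + 1), x ∈ A := Nat.find_spec hex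
    have hm1 : 1 ≤ m := by
      by_contra hm0
      have hm0' : m = 0 := by omega
      rw [hm0'] at hmspec
      exact hx0A (hmspec x0 (by rwa [zero_add, pow_one]))
    have hnotm : ∃ yy ∈ JmK K B ^ m, yy ∉ A := by
      have hmin := Nat.find_min hex (m := m - 1) (by omega)
      push_neg at hmin
      obtain ⟨yy, h1, h2⟩ := hmin
      rw [show m - 1 + 1 = m by omega] at h1
      exact ⟨yy, h1, h2⟩
    have hBm := hsup m hm1 hnotm
    intro x hxJ y hyJ
    obtain ⟨a, haA, u, hum, hxe⟩ := Submodule.mem_sup.mp (hBm x)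
    obtain ⟨a', ha'A, u', hu'm, hye⟩ := Submodule.mem_sup.mp (hBm y)
    have huJ : u ∈ JmK K B := by
      have h := JmK_pow_antitone le_rfl hm1 hum; rwa [pow_one] at h
    have hu'J : u' ∈ JmK K B := by
      have h := JmK_pow_antitone le_rfl hm1 hu'm; rwa [pow_one] at h
    have haJ : a ∈ JmK K B := by
      have ha : a = x - u := eq_sub_of_add_eq hxe
      rw [ha]
      exact sub_mem hxJ huJ
    have ha'J : a' ∈ JmK K B := by
      have ha' : a' = y - u' := eq_sub_of_add_eq hye
      rw [ha']
      exact sub_mem hyJ hu'J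
    have h1 : a * u' ∈ A := hmspec _ (by rw [pow_succ']; exact Submodule.mul_mem_mul haJ hu'm)
    have h2 : u * a' ∈ A := hmspec _ (by rw [pow_succ]; exact Submodule.mul_mem_mul hum ha'J)
    have h3 : u * u' ∈ A := by
      have h3' : u * u' ∈ JmK K B ^ (m + m) := by
        rw [pow_add]; exact Submodule.mul_mem_mul hum hu'm
      exact hmspec _ (JmK_pow_antitone (by omega) (by omega) h3')
    have hxy : x * y = a * a' + (a * u' + (u * a' + u * u')) := by
      rw [← hxe, ← hye]; noncomm_ring
    rw [hxy]
    exact A.add_mem (A.mul_mem haA ha'A) (A.add_mem h1 (A.add_mem h2 h3))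
  -- Part 1 : J(A) = A ∩ J(B)
  have part1 : ∀ a : A, a ∈ Ideal.jacobson (⊥ : Ideal A) ↔
      (a : B) ∈ Ideal.jacobson (⊥ : Ideal B) := by
    intro a
    constructor
    · intro haJA
      refine Ideal.mem_sInf.mpr ?_
      rintro M ⟨-, hMmax⟩
      set M' : Ideal A := Ideal.comap (A.val : A →ₐ[K] B) M with hM'def
      have hM'mem : ∀ z : A, z ∈ M' ↔ (z : B) ∈ M := fun z => Ideal.mem_comap
      have hM'netop : M' ≠ ⊤ := by
        intro htop
        have hMtop : M = ⊤ := by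
          rw [Ideal.eq_top_iff_one]
          obtain ⟨a1, ha1, j1, hj1, h1e⟩ := hdecomp 1
          have ha1M : a1 ∈ M := (hM'mem ⟨a1, ha1⟩).mp (by rw [htop]; trivial)
          rw [h1e]
          exact M.add_mem ha1M (hJle M hMmax hj1)
        exact hMmax.ne_top hMtop
      have hM'max : M'.IsMaximal := by
        rw [Ideal.isMaximal_def]
        refine ⟨hM'netop, fun I hI => ?_⟩
        obtain ⟨i, hiI, hiM'⟩ := SetLike.exists_of_lt hI
        have hiM : (i : B) ∉ M := fun h => hiM' ((hM'mem i).mpr h)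
        have hMsup : M ⊔ Ideal.span {(i : B)} = ⊤ := by
          refine (Ideal.isMaximal_def.mp hMmax).2 _ (lt_of_le_of_ne le_sup_left ?_)
          intro he
          exact hiM (by rw [he]; exact Submodule.mem_sup_right (Ideal.subset_span rfl))
        obtain ⟨y, hyM, z, hz, hyz⟩ := Submodule.mem_sup.mp
          (show (1 : B) ∈ M ⊔ Ideal.span {(i : B)} by rw [hMsup]; trivial)
        obtain ⟨c, rfl⟩ := Submodule.mem_span_singleton.mp hz
        obtain ⟨a1, ha1, j1, hj1, hce⟩ := hdecomp c
        have key : (1 : B) - a1 * i = y + j1 * i := by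
          rw [smul_eq_mul, hce, add_mul] at hyz
          rw [← hyz]
          abel
        have hyM' : (1 : B) - a1 * (i : B) ∈ M := by
          rw [key]
          exact M.add_mem hyM (hJle M hMmax (jac_mul_right hj1 i))
        have hwA : ((1 : A) - ⟨a1, ha1⟩ * i : A) ∈ M' := by
          rw [hM'mem]
          push_cast
          exact hyM'
        have h1I : (1 : A) ∈ I := by
          have he1 : (1 : A) = ((1 : A) - ⟨a1, ha1⟩ * i) + ⟨a1, ha1⟩ * i := by
            rw [sub_add_cancel]
          rw [he1]
          exact I.add_mem (hI.le hwA) (I.mul_mem_left _ hiI)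
        exact (Ideal.eq_top_iff_one I).mpr h1I
      have haM' : a ∈ M' := by
        have hle : Ideal.jacobson (⊥ : Ideal A) ≤ M' := sInf_le ⟨bot_le, hM'max⟩
        exact hle haJA
      exact (hM'mem a).mp haM'
    · intro haJB
      refine Ideal.mem_sInf.mpr ?_
      rintro M ⟨-, hMmax⟩
      by_contra haM
      have hMsup : M ⊔ Ideal.span {a} = ⊤ := by
        refine (Ideal.isMaximal_def.mp hMmax).2 _ (lt_of_le_of_ne le_sup_left ?_)
        intro he
        exact haM (by rw [he]; exact Submodule.mem_sup_right (Ideal.subset_span rfl))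
      obtain ⟨y, hyM, z, hz, hyz⟩ := Submodule.mem_sup.mp
        (show (1 : A) ∈ M ⊔ Ideal.span {a} by rw [hMsup]; trivial)
      obtain ⟨c, rfl⟩ := Submodule.mem_span_singleton.mp hz
      have hcaJ : ((c * a : A) : B) ∈ JmK K B := by
        push_cast
        exact jac_mul_left haJB (c : B)
      have hnil : IsNilpotent (c * a : A) := by
        refine ⟨n, ?_⟩
        have hpow : (((c * a : A) : B)) ^ n ∈ JmK K B ^ n := Submodule.pow_mem_pow _ hcaJ n
        rw [hJn, Submodule.mem_bot] at hpow
        exact Subtype.ext (by push_cast; exact hpow)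
      have hyunit : IsUnit y := by
        have hy : y = 1 - c * a := by
          rw [smul_eq_mul] at hyz
          exact eq_sub_of_add_eq hyz
        rw [hy]
        exact hnil.isUnit_one_sub
      exact hMmax.ne_top (M.eq_top_of_isUnit_mem hyM hyunit)
  -- Part 2 : A ∩ J is a two-sided ideal of B
  have part2 : ∀ x : B, x ∈ A ∧ x ∈ Ideal.jacobson (⊥ : Ideal B) → ∀ b : B,
      (b * x ∈ A ∧ b * x ∈ Ideal.jacobson (⊥ : Ideal B))
      ∧ (x * b ∈ A ∧ x * b ∈ Ideal.jacobson (⊥ : Ideal B)) := by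
    rintro x ⟨hxA, hxJ⟩ b
    obtain ⟨a, haA, j, hjJ, hbe⟩ := hdecomp b
    refine ⟨⟨?_, jac_mul_left hxJ b⟩, ?_, jac_mul_right hxJ b⟩
    · rw [hbe, add_mul]
      exact A.add_mem (A.mul_mem haA hxA) (part3 j hjJ x hxJ)
    · rw [hbe, mul_add]
      exact A.add_mem (A.mul_mem hxA haA) (part3 x hxJ j hjJ)
  -- Part 4 : simplicity of J/(A ∩ J)
  have part4 : ∀ H : Ideal B, (∀ x ∈ H, ∀ b : B, x * b ∈ H) →
      (∀ x : B, x ∈ A ∧ x ∈ Ideal.jacobson (⊥ : Ideal B) → x ∈ H) →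
      H ≤ Ideal.jacobson (⊥ : Ideal B) →
      (∀ x ∈ H, x ∈ A) ∨ H = Ideal.jacobson (⊥ : Ideal B) := by
    intro H hright hN hHJ
    by_cases hHA : ∀ x ∈ H, x ∈ A
    · exact Or.inl hHA
    right
    push_neg at hHA
    obtain ⟨h0, hh0H, hh0A⟩ := hHA
    set W : Submodule K B := Subalgebra.toSubmodule A ⊔ Submodule.restrictScalars K H with hW
    have h1W : (1 : B) ∈ W := Submodule.mem_sup_left A.one_mem
    have hmulW : ∀ p q : B, p ∈ W → q ∈ W → p * q ∈ W := by
      intro p q hp hq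
      obtain ⟨a1, ha1, u1, hu1, rfl⟩ := Submodule.mem_sup.mp hp
      obtain ⟨a2, ha2, u2, hu2, rfl⟩ := Submodule.mem_sup.mp hq
      have e : (a1 + u1) * (a2 + u2) = a1 * a2 + (a1 * u2 + (u1 * a2 + u1 * u2)) := by
        noncomm_ring
      rw [e]
      refine add_mem (Submodule.mem_sup_left (A.mul_mem ha1 ha2 : a1 * a2 ∈ A))
        (Submodule.mem_sup_right (add_mem ?_ (add_mem ?_ ?_)))
      · exact H.mul_mem_left a1 hu2
      · exact hright u1 hu1 a2
      · exact hright u1 hu1 u2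
    have hAle : A ≤ W.toSubalgebra h1W hmulW := fun z hz => Submodule.mem_sup_left hz
    have hAlt : A < W.toSubalgebra h1W hmulW := by
      refine lt_of_le_of_ne hAle ?_
      intro hAS
      have hh0S : h0 ∈ W.toSubalgebra h1W hmulW := Submodule.mem_sup_right hh0H
      rw [hAS] at hh0A
      exact hh0A hh0S
    have hStop : W.toSubalgebra h1W hmulW = ⊤ := hmax.2 _ hAlt
    refine le_antisymm hHJ ?_
    intro x hxJ
    have hxW : x ∈ W := by
      have hxS : x ∈ W.toSubalgebra h1W hmulW := by rw [hStop]; exact Algebra.mem_top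
      exact Submodule.mem_toSubalgebra.mp hxS
    obtain ⟨a, haA, h, hh, hxe⟩ := Submodule.mem_sup.mp hxW
    have haJ : a ∈ Ideal.jacobson (⊥ : Ideal B) := by
      have ha : a = x - h := eq_sub_of_add_eq hxe
      rw [ha]
      exact sub_mem hxJ (hHJ hh)
    have haH : a ∈ H := hN a ⟨haA, haJ⟩
    rw [← hxe]
    exact H.add_mem haH hh
  exact ⟨part1, part2, part3, part4⟩
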